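/- Let α be a real symmetric positive definite 2s×2s matrix. Then the matrix A = Δ⁻¹α, regarded as a complex 2s×2s matrix, is diagonalizable over ℂ and its eigenvalues are ±iα₁, …, ±iα_s for some positive real numbers α₁, …, α_s; in particular every eigenvalue of Δ⁻¹α is purely imaginary and nonzero. -/

import Mathlib

open Matrix

open Polynomial Finset

open scoped MatrixOrder

section Aux

variable {n R : Type*} [Fintype n] [DecidableEq n] [CommRing R]

private lemma charpoly_transpose' (M : Matrix n n R) : M.transpose.charpoly = M.charpoly := by
  unfold Matrix.charpoly
  rw [← Matrix.det_transpose (charmatrix M)]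
  congr 1
  ext i j
  by_cases h : i = j <;>
    simp [charmatrix_apply, Matrix.transpose_apply, Matrix.diagonal_apply, h, eq_comm]

private lemma charpoly_diagonal' (d : n → R) :
    (Matrix.diagonal d).charpoly = ∏ i, (X - C (d i)) := by
  unfold Matrix.charpoly
  have : charmatrix (Matrix.diagonal d) = Matrix.diagonal (fun i => X - C (d i)) := by
    ext i j
    by_cases h : i = j <;> simp [charmatrix_apply, Matrix.diagonal_apply, h]
  rw [this, Matrix.det_diagonal]

private lemma charpoly_conj' (P M : Matrix n n R) (hP : IsUnit P.det) :
    (P * M * P⁻¹).charpoly = M.charpoly := by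
  have hP' : P * P⁻¹ = 1 := Matrix.mul_nonsing_inv P hP
  have hP'' : P⁻¹ * P = 1 := Matrix.nonsing_inv_mul P hP
  let f : Matrix n n R →+* Matrix n n R[X] := (C : R →+* R[X]).mapMatrix
  have h1 : f P * f P⁻¹ = 1 := by rw [← _root_.map_mul, hP', _root_.map_one]
  have h2 : f P⁻¹ * f P = 1 := by rw [← _root_.map_mul, hP'', _root_.map_one]
  have key : charmatrix (P * M * P⁻¹) = f P * charmatrix M * f P⁻¹ := by
    unfold charmatrix
    rw [_root_.map_mul, _root_.map_mul, mul_sub, sub_mul]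
    congr 1
    have : (Matrix.scalar n (X : R[X])) * ((C : R →+* R[X]).mapMatrix P⁻¹) =
        ((C : R →+* R[X]).mapMatrix P⁻¹) * (Matrix.scalar n (X : R[X])) :=
      (Matrix.scalar_commute X (fun r => Commute.all _ _) _)
    show Matrix.scalar n (X : R[X]) = f P * Matrix.scalar n X * f P⁻¹
    rw [mul_assoc]
    rw [this, ← mul_assoc, h1, one_mul]
  unfold Matrix.charpoly
  rw [key, Matrix.det_mul, Matrix.det_mul, mul_comm, ← mul_assoc, ← Matrix.det_mul, h2,
    Matrix.det_one, one_mul]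

private lemma pairing' (s : ℕ) : ∀ (m : Multiset ℝ), Multiset.card m = 2 * s →
    m.map (fun x => -x) = m → (0 : ℝ) ∉ m →
    ∃ a : Fin s → ℝ, (∀ j, 0 < a j) ∧
      m = (univ.val.map a) + (univ.val.map fun j => -(a j)) := by
  induction s with
  | zero =>
    intro m hc _ _
    refine ⟨Fin.elim0, fun j => j.elim0, ?_⟩
    simpa using hc
  | succ s ih =>
    intro m hc hneg h0
    have hne : m ≠ 0 := by
      intro h; rw [h] at hc; simp at hc
    obtain ⟨x, hx⟩ := Multiset.exists_mem_of_ne_zero hne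
    have hx0 : x ≠ 0 := fun h => h0 (h ▸ hx)
    obtain ⟨b, hb, hbm, hbm'⟩ : ∃ b : ℝ, 0 < b ∧ b ∈ m ∧ -b ∈ m := by
      rcases lt_or_gt_of_ne hx0 with h | h
      · refine ⟨-x, by linarith, ?_, by simpa using hx⟩
        rw [← hneg]; exact Multiset.mem_map_of_mem _ hx
      · refine ⟨x, h, hx, ?_⟩
        rw [← hneg]; exact Multiset.mem_map_of_mem _ hx
    set m' := (m.erase b).erase (-b) with hm'
    have hbm2 : -b ∈ m.erase b := (Multiset.mem_erase_of_ne (by intro h; nlinarith [h])).2 hbm'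
    have hmm : m = b ::ₘ (-b) ::ₘ m' := by
      rw [hm', Multiset.cons_erase hbm2, Multiset.cons_erase hbm]
    have hc' : Multiset.card m' = 2 * s := by
      have := congrArg Multiset.card hmm
      simp at this; omega
    have hneg' : m'.map (fun x => -x) = m' := by
      have : m.map (fun x => -x) = (-b) ::ₘ b ::ₘ m'.map (fun x => -x) := by
        rw [hmm]; simp
      rw [hneg, hmm] at this
      have h2 : b ::ₘ (-b) ::ₘ m' = b ::ₘ (-b) ::ₘ m'.map (fun x => -x) := by
        rw [this, Multiset.cons_swap]
      simpa using h2.symm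
    have h0' : (0:ℝ) ∉ m' := fun h => h0 (by rw [hmm]; simp [h])
    obtain ⟨a, ha, hma⟩ := ih m' hc' hneg' h0'
    refine ⟨Fin.cons b a, fun j => ?_, ?_⟩
    · refine Fin.cases ?_ ?_ j <;> simp [hb, ha]
    · rw [hmm, hma]
      have h1 : (univ.val.map (Fin.cons b a : Fin (s+1) → ℝ)) = b ::ₘ univ.val.map a := by
        rw [Fin.univ_val_map, List.ofFn_succ]
        simp [Function.comp_def]
      have h2 : (univ.val.map (fun j => -(Fin.cons b a : Fin (s+1) → ℝ) j)) =
          (-b) ::ₘ univ.val.map (fun j => -(a j)) := by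
        rw [Fin.univ_val_map, List.ofFn_succ]
        simp [Function.comp_def]
      rw [h1, h2]
      simp only [Multiset.cons_add, Multiset.add_cons]
      rw [Multiset.cons_swap]

private lemma exists_perm_comp' {ι : Type*} [Fintype ι] [DecidableEq ι] (f g : ι → ℝ)
    (h : univ.val.map f = univ.val.map g) : ∃ σ : Equiv.Perm ι, f ∘ σ = g := by
  classical
  let n := Fintype.card ι
  let ρ : Fin n ≃ ι := (Fintype.equivFin ι).symm
  have hmap : ∀ (u : ι → ℝ), (univ.val.map (u ∘ ρ)) = univ.val.map u := by
    intro u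
    conv_rhs => rw [← Multiset.map_univ_val_equiv ρ]
    rw [Multiset.map_map]
  set f' := f ∘ ρ with hf'
  set g' := g ∘ ρ with hg'
  have h' : univ.val.map f' = univ.val.map g' := by rw [hmap, hmap, h]
  set σ₁ := Tuple.sort f'
  set σ₂ := Tuple.sort g'
  have hms : ∀ (u : Fin n → ℝ) (τ : Equiv.Perm (Fin n)),
      univ.val.map (u ∘ τ) = univ.val.map u := by
    intro u τ
    conv_rhs => rw [← Multiset.map_univ_val_equiv τ]
    rw [Multiset.map_map]
  have key : f' ∘ σ₁ = g' ∘ σ₂ := by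
    have hm : univ.val.map (f' ∘ σ₁) = univ.val.map (g' ∘ σ₂) := by
      rw [hms, hms, h']
    have hl : (List.ofFn (f' ∘ σ₁)).Perm (List.ofFn (g' ∘ σ₂)) := by
      rw [← Multiset.coe_eq_coe]
      rw [← Fin.univ_val_map, ← Fin.univ_val_map]
      exact_mod_cast hm
    have := List.Perm.eq_of_sortedLE
      ((Tuple.monotone_sort f').sortedLE_ofFn) ((Tuple.monotone_sort g').sortedLE_ofFn) hl
    exact List.ofFn_injective this
  refine ⟨(ρ.symm.trans (σ₂⁻¹ : Equiv.Perm (Fin n))).trans (σ₁.trans ρ), ?_⟩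
  funext x
  have := congrFun key (σ₂⁻¹ (ρ.symm x))
  simpa [hf', hg', Function.comp] using this

private lemma prod_univ_map' {s : ℕ} {β : Type*} (f : Fin 2 × Fin s → β) :
    (univ : Finset (Fin 2 × Fin s)).val.map f =
      univ.val.map (fun j => f (0, j)) + univ.val.map (fun j => f (1, j)) := by
  rw [← Finset.univ_product_univ, Finset.product_val]
  have h2 : (univ : Finset (Fin 2)).val = 0 ::ₘ 1 ::ₘ 0 := by decide
  rw [h2, Multiset.cons_product, Multiset.cons_product, Multiset.zero_product]
  simp [Multiset.map_map, Function.comp_def]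

end Aux

/-- The standard symplectic matrix `Δ` of a system of `s` modes: block-diagonal
with `s` copies of the 2×2 block `[[0,1],[-1,0]]`. -/
noncomputable def Sympl (s : ℕ) : Matrix (Fin 2 × Fin s) (Fin 2 × Fin s) ℝ :=
  Matrix.blockDiagonal (fun _ => !![0, 1; -1, 0])

/-- For a real symmetric positive definite matrix `α`, the matrix
`A = Δ⁻¹α`, regarded as a complex matrix, is diagonalizable over `ℂ` with eigenvalues
`±iα₁, …, ±iα_s` for some positive reals `α_j`; in particular all its eigenvalues are
purely imaginary and nonzero. -/
theorem inv_sympl_mul_posDef_diagonalizable (s : ℕ)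
    (α : Matrix (Fin 2 × Fin s) (Fin 2 × Fin s) ℝ) (hα : α.PosDef) :
    ∃ a : Fin s → ℝ, (∀ j, 0 < a j) ∧
      ∃ P : Matrix (Fin 2 × Fin s) (Fin 2 × Fin s) ℂ, IsUnit P.det ∧
        ((Sympl s)⁻¹ * α).map (fun x : ℝ => (x : ℂ)) =
          P * Matrix.diagonal
            (fun p => (if p.1 = 0 then Complex.I else -Complex.I) * (a p.2 : ℂ)) * P⁻¹ := by
  classical
  -- basic facts about Δ
  set Δ := Sympl s with hΔdef
  have hΔdet : Δ.det = 1 := by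
    rw [hΔdef, Sympl, Matrix.det_blockDiagonal]
    simp [Matrix.det_fin_two_of]
  have hΔunit : IsUnit Δ.det := by rw [hΔdet]; exact isUnit_one
  have hΔT : Δᵀ = -Δ := by
    ext ⟨i, k⟩ ⟨j, l⟩
    simp only [Matrix.transpose_apply, hΔdef, Sympl, Matrix.blockDiagonal_apply,
      Matrix.neg_apply]
    by_cases h : k = l
    · subst h
      simp only [if_pos rfl]
      fin_cases i <;> fin_cases j <;> norm_num
    · simp [h, Ne.symm h]
  -- the square root T of α
  set T := CFC.sqrt α with hTdef
  have hTps : T.PosSemidef := (CFC.sqrt_nonneg α).posSemidef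
  have hTT : T * T = α := CFC.sqrt_mul_sqrt_self α hα.posSemidef.nonneg
  have hTsym : Tᵀ = T := by
    have := hTps.1
    rwa [Matrix.IsHermitian, Matrix.conjTranspose_eq_transpose_of_trivial] at this
  have hTdet : T.det ≠ 0 := by
    intro h
    have : α.det = 0 := by rw [← hTT, Matrix.det_mul, h, mul_zero]
    exact (hα.det_pos.ne') this
  have hTunit : IsUnit T.det := isUnit_iff_ne_zero.mpr hTdet
  -- B = T Δ⁻¹ T is real skew-symmetric
  set B := T * Δ⁻¹ * T with hBdef
  have hBT : Bᵀ = -B := by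
    have hinvT : (Δ⁻¹)ᵀ = -Δ⁻¹ := by
      rw [Matrix.transpose_nonsing_inv, hΔT]
      apply Matrix.inv_eq_right_inv
      rw [Matrix.neg_mul, Matrix.mul_neg, neg_neg, Matrix.mul_nonsing_inv _ hΔunit]
    rw [hBdef, Matrix.transpose_mul, Matrix.transpose_mul, hTsym, hinvT]
    noncomm_ring
  -- map to ℂ
  set φ := ((Complex.ofRealHom : ℝ →+* ℂ).mapMatrix : Matrix (Fin 2 × Fin s) (Fin 2 × Fin s) ℝ →+* Matrix (Fin 2 × Fin s) (Fin 2 × Fin s) ℂ) with hφdef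
  have hφdet : ∀ M : Matrix (Fin 2 × Fin s) (Fin 2 × Fin s) ℝ, (φ M).det = Complex.ofReal M.det := by
    intro M
    rw [hφdef, ← RingHom.map_det]
    rfl
  have hφT : IsUnit (φ T).det := by
    rw [hφdet]
    simp [hTdet]
  set Bc := φ B with hBcdef
  have hφapp : ∀ M : Matrix (Fin 2 × Fin s) (Fin 2 × Fin s) ℝ,
      φ M = M.map (Complex.ofRealHom) := fun M => rfl
  have hBcT : Bcᵀ = -Bc := by
    calc Bcᵀ = Bᵀ.map (Complex.ofRealHom) := by rw [hBcdef, hφapp, Matrix.transpose_map]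
    _ = (-B).map (Complex.ofRealHom) := by rw [hBT]
    _ = -Bc := by rw [hBcdef, hφapp]; exact (_root_.map_neg φ B)
  -- the Hermitian matrix H = -i B
  set H := (-Complex.I) • Bc with hHdef
  have hBcConj : Bcᴴ = Bcᵀ := by
    ext i j
    rw [hBcdef, hφapp]
    simp [Matrix.conjTranspose_apply, Matrix.transpose_apply, Matrix.map_apply,
      Complex.conj_ofReal]
  have hH : H.IsHermitian := by
    rw [Matrix.IsHermitian, hHdef, Matrix.conjTranspose_smul, hBcConj, hBcT]
    simp
  set U := (hH.eigenvectorUnitary : Matrix (Fin 2 × Fin s) (Fin 2 × Fin s) ℂ) with hUdef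
  set e := hH.eigenvalues with hedef
  have hUU : U * star U = 1 := Unitary.coe_mul_star_self _
  have hUU' : star U * U = 1 := Unitary.coe_star_mul_self _
  have hUdet : IsUnit U.det := Matrix.isUnit_det_of_right_inverse hUU
  have hUinv : U⁻¹ = star U := Matrix.inv_eq_right_inv hUU
  have hspec : H = U * Matrix.diagonal (fun p => (e p : ℂ)) * U⁻¹ := by
    rw [hUinv]
    convert hH.spectral_theorem using 2
    rfl
  -- determinant of H is nonzero, hence all eigenvalues are nonzero
  have hBdet : B.det ≠ 0 := by
    rw [hBdef, Matrix.det_mul, Matrix.det_mul]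
    have h1 : Δ⁻¹.det ≠ 0 := by
      have := Matrix.det_nonsing_inv (A := Δ)
      rw [this, hΔdet]
      simp
    exact mul_ne_zero (mul_ne_zero hTdet h1) hTdet
  have hHdet : H.det ≠ 0 := by
    rw [hHdef, Matrix.det_smul, hBcdef, hφdet]
    apply mul_ne_zero
    · apply pow_ne_zero
      simp [Complex.I_ne_zero]
    · simpa using hBdet
  have hcard : Fintype.card (Fin 2 × Fin s) = 2 * s := by simp
  have hprod : ∏ p : Fin 2 × Fin s, (e p : ℂ) ≠ 0 := by
    have h := hH.det_eq_prod_eigenvalues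
    simp only [RCLike.ofReal_alg, Complex.real_smul, mul_one] at h
    rw [hedef]
    intro hz
    rw [hz] at h
    exact hHdet h
  have hezero : ∀ p, e p ≠ 0 := by
    intro p hp
    apply hprod
    apply Finset.prod_eq_zero (Finset.mem_univ p)
    simp [hp]
  -- characteristic polynomial computations
  set De := Matrix.diagonal (fun p : Fin 2 × Fin s => (e p : ℂ)) with hDedef
  have hHT : Hᵀ = -H := by
    rw [hHdef, Matrix.transpose_smul, hBcT]
    simp
  have hnegH : -H = U * Matrix.diagonal (fun p : Fin 2 × Fin s => (-(e p) : ℂ)) * U⁻¹ := by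
    rw [hspec]
    have hd : Matrix.diagonal (fun p : Fin 2 × Fin s => (-(e p) : ℂ))
        = -De := by
      rw [hDedef]
      ext i j
      by_cases h : i = j <;> simp [Matrix.diagonal_apply, h]
    rw [hd]
    simp only [Matrix.neg_mul, Matrix.mul_neg]
  have hcp1 : H.charpoly = ∏ p : Fin 2 × Fin s, (X - C ((e p : ℂ))) := by
    rw [hspec, charpoly_conj' U _ hUdet, charpoly_diagonal']
  have hcp2 : H.charpoly = ∏ p : Fin 2 × Fin s, (X - C (-(e p : ℂ))) := by
    calc H.charpoly = Hᵀ.charpoly := (charpoly_transpose' H).symm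
    _ = (-H).charpoly := by rw [hHT]
    _ = _ := by
      rw [hnegH, charpoly_conj' U _ hUdet, charpoly_diagonal']
  have hprodpoly : (∏ p : Fin 2 × Fin s, (X - C ((e p : ℂ))))
      = ∏ p : Fin 2 × Fin s, (X - C (-(e p : ℂ))) := by rw [← hcp1, hcp2]
  have hfinprod : ∀ f : (Fin 2 × Fin s) → ℂ,
      (∏ p, (X - C (f p))) = ((univ.val.map f).map (fun z => X - C z)).prod := by
    intro f
    rw [Multiset.map_map]
    rfl
  have hmeq : univ.val.map (fun p : Fin 2 × Fin s => (e p : ℂ))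
      = univ.val.map (fun p : Fin 2 × Fin s => -(e p : ℂ)) := by
    have h1 := Polynomial.roots_multiset_prod_X_sub_C
      (univ.val.map (fun p : Fin 2 × Fin s => (e p : ℂ)))
    have h2 := Polynomial.roots_multiset_prod_X_sub_C
      (univ.val.map (fun p : Fin 2 × Fin s => -(e p : ℂ)))
    rw [← h1, ← h2, ← hfinprod _, ← hfinprod _, hprodpoly]
  -- the multiset of eigenvalues is closed under negation
  have hme : (univ.val.map e).map (fun x : ℝ => -x) = univ.val.map e := by
    apply Multiset.map_injective (Complex.ofReal_injective)
    rw [Multiset.map_map, Multiset.map_map, Multiset.map_map]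
    exact (Multiset.map_congr rfl fun p _ => by simp).trans
      (hmeq.symm.trans (Multiset.map_congr rfl fun p _ => by simp))
  have hmcard : Multiset.card (univ.val.map e) = 2 * s := by
    rw [Multiset.card_map]
    simpa using hcard
  have hm0 : (0:ℝ) ∉ univ.val.map e := by
    intro h
    obtain ⟨p, _, hp⟩ := Multiset.mem_map.mp h
    exact hezero p hp
  obtain ⟨a, ha, hma⟩ := pairing' s (univ.val.map e) hmcard hme hm0
  refine ⟨a, ha, ?_⟩
  -- the target function
  set g : Fin 2 × Fin s → ℝ := fun p => if p.1 = 0 then a p.2 else -(a p.2) with hgdef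
  have hg : univ.val.map g = univ.val.map e := by
    rw [prod_univ_map' g, hma]
    have e1 : Multiset.map (fun j => g (0, j)) univ.val = univ.val.map a :=
      Multiset.map_congr rfl (fun j _ => by simp [hgdef])
    have e2 : Multiset.map (fun j => g (1, j)) univ.val
        = univ.val.map (fun j => -(a j)) :=
      Multiset.map_congr rfl (fun j _ => by simp [hgdef])
    rw [e1, e2]
  obtain ⟨σ, hσ⟩ := exists_perm_comp' e g hg.symm
  -- permutation matrices
  set E := (σ.toPEquiv.toMatrix : Matrix (Fin 2 × Fin s) (Fin 2 × Fin s) ℂ) with hEdef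
  set F := ((σ⁻¹ : Equiv.Perm (Fin 2 × Fin s)).toPEquiv.toMatrix :
    Matrix (Fin 2 × Fin s) (Fin 2 × Fin s) ℂ) with hFdef
  have hEF : E * F = 1 := by
    rw [hEdef, hFdef, ← PEquiv.toMatrix_trans, ← Equiv.toPEquiv_trans]
    have : σ.trans (σ⁻¹ : Equiv.Perm (Fin 2 × Fin s)) = Equiv.refl _ :=
      Equiv.ext fun x => by simp
    rw [this, Equiv.toPEquiv_refl, PEquiv.toMatrix_refl]
  have hFE : F * E = 1 := by
    rw [hEdef, hFdef, ← PEquiv.toMatrix_trans, ← Equiv.toPEquiv_trans]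
    have : (σ⁻¹ : Equiv.Perm (Fin 2 × Fin s)).trans σ = Equiv.refl _ :=
      Equiv.ext fun x => by simp
    rw [this, Equiv.toPEquiv_refl, PEquiv.toMatrix_refl]
  set Dg := Matrix.diagonal (fun p : Fin 2 × Fin s => (g p : ℂ)) with hDgdef
  have hDg : Dg = E * De * F := by
    rw [hEdef, hFdef, PEquiv.toMatrix_toPEquiv_mul, PEquiv.mul_toMatrix_toPEquiv]
    ext i j
    rw [hDgdef, hDedef]
    by_cases h : i = j
    · subst h
      simp only [Matrix.submatrix_apply, id, Matrix.diagonal_apply_eq]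
      have := congrFun hσ i
      simp only [Function.comp] at this
      rw [show (σ⁻¹ : Equiv.Perm (Fin 2 × Fin s)).symm i = σ i from rfl,
        Matrix.diagonal_apply_eq, ← this]
    · have h2 : σ i ≠ (σ⁻¹ : Equiv.Perm (Fin 2 × Fin s)).symm j := by
        rw [show (σ⁻¹ : Equiv.Perm (Fin 2 × Fin s)).symm j = σ j from rfl]
        exact fun hc => h (σ.injective hc)
      simp [Matrix.submatrix_apply, Matrix.diagonal_apply, h, h2]
  have hDe2 : De = F * Dg * E := by
    rw [hDg]
    have h1 : F * (E * De * F) * E = (F * E) * (De * (F * E)) := by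
      simp only [Matrix.mul_assoc]
    rw [h1, hFE, one_mul, mul_one]
  -- assemble P
  set W := φ T with hWdef
  have hWW : W * φ T⁻¹ = 1 := by
    rw [hWdef, ← _root_.map_mul, Matrix.mul_nonsing_inv T hTunit, _root_.map_one]
  have hWinv : W⁻¹ = φ T⁻¹ := Matrix.inv_eq_right_inv hWW
  have hWunit : IsUnit W.det := hφT
  set P := W⁻¹ * U * F with hPdef
  set Q := E * star U * W with hQdef
  have hPQ : P * Q = 1 := by
    rw [hPdef, hQdef]
    calc W⁻¹ * U * F * (E * star U * W) = W⁻¹ * (U * ((F * E) * (star U * W))) := by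
          simp only [Matrix.mul_assoc]
    _ = W⁻¹ * (U * (star U * W)) := by rw [hFE, one_mul]
    _ = W⁻¹ * ((U * star U) * W) := by simp only [Matrix.mul_assoc]
    _ = 1 := by rw [hUU, one_mul, Matrix.nonsing_inv_mul W hWunit]
  have hQP : Q * P = 1 := by
    rw [hPdef, hQdef]
    calc E * star U * W * (W⁻¹ * U * F) = E * (star U * ((W * W⁻¹) * (U * F))) := by
          simp only [Matrix.mul_assoc]
    _ = E * (star U * (U * F)) := by rw [Matrix.mul_nonsing_inv W hWunit, one_mul]
    _ = E * ((star U * U) * F) := by simp only [Matrix.mul_assoc]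
    _ = 1 := by rw [hUU', one_mul, hEF]
  have hPdet : IsUnit P.det := Matrix.isUnit_det_of_right_inverse hPQ
  have hPinv : P⁻¹ = Q := Matrix.inv_eq_right_inv hPQ
  refine ⟨P, hPdet, ?_⟩
  -- the target diagonal matrix
  have hDtarget : Matrix.diagonal
      (fun p : Fin 2 × Fin s => (if p.1 = 0 then Complex.I else -Complex.I) * (a p.2 : ℂ))
      = Complex.I • Dg := by
    rw [hDgdef]
    ext i j
    by_cases h : i = j
    · subst h
      simp only [Matrix.diagonal_apply_eq, Matrix.smul_apply, Matrix.diagonal_apply_eq,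
        smul_eq_mul, hgdef]
      by_cases h1 : i.1 = 0 <;> simp [h1] <;> push_cast <;> ring
    · simp [Matrix.diagonal_apply, h]
  -- Bc in terms of H
  have hBcI : Bc = Complex.I • H := by
    rw [hHdef, smul_smul]
    have : Complex.I * -Complex.I = 1 := by
      simp [Complex.I_mul_I]
    rw [this, one_smul]
  -- final computation
  have hreal : Δ⁻¹ * α = T⁻¹ * B * T := by
    rw [hBdef, ← hTT]
    calc Δ⁻¹ * (T * T) = (T⁻¹ * T) * (Δ⁻¹ * (T * T)) := by
          rw [Matrix.nonsing_inv_mul T hTunit, one_mul]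
    _ = T⁻¹ * (T * Δ⁻¹ * T) * T := by simp only [Matrix.mul_assoc]
  have hmain : φ (Δ⁻¹ * α) = P * (Complex.I • Dg) * Q := by
    rw [hreal, _root_.map_mul, _root_.map_mul, ← hBcdef, ← hWinv, ← hWdef]
    rw [hBcI, hspec, hUinv, hDe2]
    rw [hPdef, hQdef]
    simp only [Matrix.mul_assoc, Matrix.smul_mul, Matrix.mul_smul]
  rw [hPinv, hDtarget]
  have hφeq : ((Sympl s)⁻¹ * α).map (fun x : ℝ => (x : ℂ)) = φ (Δ⁻¹ * α) := rfl
  rw [hφeq, hmain]
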